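/- Let A be a commutative ring such that every finitely generated projective A-module of rank ≥ d+1 has a unimodular element, and such that Aᵐ is cancellative (A ⊕ Q ≅ A ⊕ Q' with Q, Q' of rank m−1 implies Q ≅ Q') for all m ≥ d+1. Then every finitely generated projective A-module P of constant rank r ≥ d+1 can be generated by r + d elements. -/

import Mathlib

/-- A finitely generated projective module `P` over `A` has (constant) rank `r` if its
localization at every prime ideal is free of rank `r`. -/
def HasConstRank (A : Type*) [CommRing A] (P : Type*) [AddCommGroup P] [Module A P]
    (r : ℕ) : Prop :=
  ∀ p : PrimeSpectrum A, Nonempty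
    (Module.Basis (Fin r) (Localization.AtPrime p.asIdeal)
      (LocalizedModule p.asIdeal.primeCompl P))

set_option linter.unusedSectionVars false

section Helpers

variable {R : Type*} [CommRing R] (S : Submonoid R)
variable {M M' N N' : Type*} [AddCommGroup M] [Module R M] [AddCommGroup M'] [Module R M']
  [AddCommGroup N] [Module R N] [AddCommGroup N'] [Module R N']

instance IsLocalizedModule.prodMap' (f : M →ₗ[R] M') (g : N →ₗ[R] N')
    [IsLocalizedModule S f] [IsLocalizedModule S g] :
    IsLocalizedModule S (f.prodMap g) where
  map_units s := by
    have hf := (Module.End.isUnit_iff _).mp (IsLocalizedModule.map_units f s)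
    have hg := (Module.End.isUnit_iff _).mp (IsLocalizedModule.map_units g s)
    rw [Module.End.isUnit_iff]
    constructor
    · intro x y h
      have h1 : (s : R) • x.1 = (s : R) • y.1 := congrArg Prod.fst h
      have h2 : (s : R) • x.2 = (s : R) • y.2 := congrArg Prod.snd h
      exact Prod.ext (hf.1 h1) (hg.1 h2)
    · intro x
      obtain ⟨a, ha⟩ := hf.2 x.1
      obtain ⟨b, hb⟩ := hg.2 x.2
      exact ⟨(a, b), Prod.ext ha hb⟩
  surj y := by
    obtain ⟨⟨x₁, s₁⟩, h₁⟩ := IsLocalizedModule.surj S f y.1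
    obtain ⟨⟨x₂, s₂⟩, h₂⟩ := IsLocalizedModule.surj S g y.2
    refine ⟨⟨(s₂ • x₁, s₁ • x₂), s₁ * s₂⟩, Prod.ext ?_ ?_⟩
    · show (s₁ * s₂) • y.1 = f (s₂ • x₁)
      have hf2 : f (s₂ • x₁) = (s₂ : R) • f x₁ := by rw [Submonoid.smul_def, map_smul]
      rw [hf2, ← h₁, Submonoid.smul_def, Submonoid.smul_def, Submonoid.coe_mul,
        mul_comm, mul_smul]
    · show (s₁ * s₂) • y.2 = g (s₁ • x₂)
      have hg2 : g (s₁ • x₂) = (s₁ : R) • g x₂ := by rw [Submonoid.smul_def, map_smul]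
      rw [hg2, ← h₂, Submonoid.smul_def, Submonoid.smul_def, Submonoid.coe_mul, mul_smul]
  exists_of_eq {x y} h := by
    have h1 : f x.1 = f y.1 := congrArg Prod.fst h
    have h2 : g x.2 = g y.2 := congrArg Prod.snd h
    obtain ⟨c₁, hc₁⟩ := IsLocalizedModule.exists_of_eq (S := S) (f := f) h1
    obtain ⟨c₂, hc₂⟩ := IsLocalizedModule.exists_of_eq (S := S) (f := g) h2
    refine ⟨c₁ * c₂, Prod.ext ?_ ?_⟩
    · show (c₁ * c₂) • x.1 = (c₁ * c₂) • y.1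
      rw [mul_comm, mul_smul, mul_smul, hc₁]
    · show (c₁ * c₂) • x.2 = (c₁ * c₂) • y.2
      rw [mul_smul, mul_smul, hc₂]

/-- An `R`-linear equiv between `S⁻¹R`-modules is `S⁻¹R`-linear. -/
noncomputable def LinearEquiv.extendScalarsOfIsLocalization' (A : Type*) [CommRing A] [Algebra R A]
    [IsLocalization S A] {P Q : Type*} [AddCommGroup P] [Module R P] [Module A P]
    [IsScalarTower R A P] [AddCommGroup Q] [Module R Q] [Module A Q] [IsScalarTower R A Q]
    (e : P ≃ₗ[R] Q) : P ≃ₗ[A] Q :=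
  LinearEquiv.ofLinear (e.toLinearMap.extendScalarsOfIsLocalization S A)
    (e.symm.toLinearMap.extendScalarsOfIsLocalization S A)
    (by ext x; simp) (by ext x; simp)

/-- Splitting of a retraction: `V ≃ W × ker π`. -/
noncomputable def splitEquiv {V W : Type*} [AddCommGroup V] [Module R V] [AddCommGroup W]
    [Module R W] (π : V →ₗ[R] W) (σ : W →ₗ[R] V) (h : π ∘ₗ σ = LinearMap.id) :
    V ≃ₗ[R] W × (LinearMap.ker π) where
  toFun x := (π x, ⟨x - σ (π x), by
    have := congrArg (fun f => f (π x)) h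
    simp only [LinearMap.comp_apply, LinearMap.id_apply] at this
    simp [LinearMap.mem_ker, this]⟩)
  map_add' x y := by
    refine Prod.ext (by simp) (Subtype.ext ?_)
    simp; abel
  map_smul' c x := by
    refine Prod.ext (by simp) (Subtype.ext ?_)
    simp [smul_sub]
  invFun y := σ y.1 + y.2
  left_inv x := by simp
  right_inv y := by
    have hy := y.2.2
    rw [LinearMap.mem_ker] at hy
    have hπσ : ∀ w, π (σ w) = w := fun w => by
      have := congrArg (fun f => f w) h
      simpa using this
    refine Prod.ext ?_ (Subtype.ext ?_)
    · simp [hπσ, hy]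
    · simp [hπσ, hy]

theorem Module.Projective.prod' {P Q : Type*} [AddCommGroup P] [Module R P] [AddCommGroup Q]
    [Module R Q] (hP : Module.Projective R P) (hQ : Module.Projective R Q) :
    Module.Projective R (P × Q) := by
  obtain ⟨sP, hsP⟩ := hP.out
  obtain ⟨sQ, hsQ⟩ := hQ.out
  let e : ((P ⊕ Q) →₀ R) ≃ₗ[R] (P →₀ R) × (Q →₀ R) := Finsupp.sumFinsuppLEquivProdFinsupp R
  refine Module.Projective.of_split (M := (P ⊕ Q) →₀ R)
    (e.symm.toLinearMap ∘ₗ (sP.prodMap sQ))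
    (((Finsupp.linearCombination R id).prodMap (Finsupp.linearCombination R id)) ∘ₗ
      e.toLinearMap) ?_
  refine LinearMap.ext fun x => ?_
  simp only [LinearMap.comp_apply, LinearEquiv.coe_coe, LinearEquiv.apply_symm_apply,
    LinearMap.prodMap_apply, LinearMap.id_apply]
  exact Prod.ext (hsP x.1) (hsQ x.2)

end Helpers

section Rank

variable {A : Type} [CommRing A] [IsNoetherianRing A]

lemma locFinite (M : Type) [AddCommGroup M] [Module A M] (hfin : Module.Finite A M)
    (p : PrimeSpectrum A) :
    Module.Finite (Localization.AtPrime p.asIdeal) (LocalizedModule p.asIdeal.primeCompl M) :=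
  Module.Finite.of_isLocalizedModule (S := p.asIdeal.primeCompl)
    (f := LocalizedModule.mkLinearMap p.asIdeal.primeCompl M)

lemma locFree (M : Type) [AddCommGroup M] [Module A M] (hfin : Module.Finite A M)
    (hproj : Module.Projective A M) (p : PrimeSpectrum A) :
    Module.Free (Localization.AtPrime p.asIdeal) (LocalizedModule p.asIdeal.primeCompl M) := by
  haveI := hfin
  haveI := hproj
  haveI : Module.FinitePresentation A M := (Module.finitePresentation_iff_finite A M).mpr hfin
  exact Module.free_of_flat_of_isLocalRing

lemma hasConstRank_iff_rankAtStalk (M : Type) [AddCommGroup M] [Module A M]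
    (hfin : Module.Finite A M) (hproj : Module.Projective A M) (r : ℕ) :
    HasConstRank A M r ↔ ∀ p : PrimeSpectrum A, Module.rankAtStalk M p = r := by
  constructor
  · intro h p
    obtain ⟨b⟩ := h p
    show Module.finrank _ _ = r
    rw [Module.finrank_eq_card_basis b, Fintype.card_fin]
  · intro h p
    haveI := locFinite M hfin p
    haveI := locFree M hfin hproj p
    exact ⟨Module.finBasisOfFinrankEq _ _ (h p)⟩

lemma rankAtStalk_congr {M N : Type} [AddCommGroup M] [Module A M] [AddCommGroup N] [Module A N]
    (e : M ≃ₗ[A] N) (p : PrimeSpectrum A) :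
    Module.rankAtStalk (R := A) M p = Module.rankAtStalk (R := A) N p := by
  let S := p.asIdeal.primeCompl
  let f : M →ₗ[A] LocalizedModule S N := (LocalizedModule.mkLinearMap S N) ∘ₗ (e : M →ₗ[A] N)
  haveI : IsLocalizedModule S f :=
    IsLocalizedModule.of_linearEquiv_right S (LocalizedModule.mkLinearMap S N) e
  let E : LocalizedModule S M ≃ₗ[A] LocalizedModule S N := IsLocalizedModule.iso S f
  exact LinearEquiv.finrank_eq (E.extendScalarsOfIsLocalization S (Localization.AtPrime p.asIdeal))

lemma rankAtStalk_prod (M N : Type) [AddCommGroup M] [Module A M] [AddCommGroup N] [Module A N]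
    (hMf : Module.Finite A M) (hMp : Module.Projective A M)
    (hNf : Module.Finite A N) (hNp : Module.Projective A N) (p : PrimeSpectrum A) :
    Module.rankAtStalk (R := A) (M × N) p =
      Module.rankAtStalk (R := A) M p + Module.rankAtStalk (R := A) N p := by
  let S := p.asIdeal.primeCompl
  let f := (LocalizedModule.mkLinearMap S M).prodMap (LocalizedModule.mkLinearMap S N)
  let E : LocalizedModule S (M × N) ≃ₗ[A] LocalizedModule S M × LocalizedModule S N :=
    IsLocalizedModule.iso S f
  haveI := locFinite M hMf p
  haveI := locFinite N hNf p
  haveI := locFree M hMf hMp p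
  haveI := locFree N hNf hNp p
  have := LinearEquiv.finrank_eq
    (E.extendScalarsOfIsLocalization S (Localization.AtPrime p.asIdeal))
  show Module.finrank _ _ = _
  rw [this, Module.finrank_prod]
  rfl

lemma rankAtStalk_pi (n : ℕ) (p : PrimeSpectrum A) :
    Module.rankAtStalk (R := A) (Fin n → A) p = n := by
  let b := (Pi.basisFun A (Fin n)).ofIsLocalizedModule (Localization.AtPrime p.asIdeal)
    p.asIdeal.primeCompl (LocalizedModule.mkLinearMap p.asIdeal.primeCompl (Fin n → A))
  show Module.finrank _ _ = n
  rw [Module.finrank_eq_card_basis b, Fintype.card_fin]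

lemma rankAtStalk_self (p : PrimeSpectrum A) :
    Module.rankAtStalk (R := A) A p = 1 := by
  rw [rankAtStalk_congr (LinearEquiv.funUnique (Fin 1) A A).symm p, rankAtStalk_pi]

end Rank

section Main

variable {A : Type} [CommRing A] [IsNoetherianRing A]

omit [IsNoetherianRing A] in
lemma gen_of_surj (P : Type) [AddCommGroup P] [Module A P] (n : ℕ)
    (f : (Fin n → A) →ₗ[A] P) (hf : Function.Surjective f) :
    ∃ s : Finset P, s.card ≤ n ∧ Submodule.span A (s : Set P) = ⊤ := by
  classical
  refine ⟨Finset.image (fun i => f (Pi.basisFun A (Fin n) i)) Finset.univ, ?_, ?_⟩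
  · exact (Finset.card_image_le).trans (by simp)
  · rw [Finset.coe_image, Finset.coe_univ, Set.image_univ]
    have h1 : (Set.range fun i => f (Pi.basisFun A (Fin n) i))
        = f '' Set.range (Pi.basisFun A (Fin n)) := Set.range_comp f _
    rw [h1, ← Submodule.map_span, (Pi.basisFun A (Fin n)).span_eq, Submodule.map_top,
      LinearMap.range_eq_top.mpr hf]

omit [IsNoetherianRing A] in
lemma summand_finite {V P Q : Type} [AddCommGroup V] [Module A V] [AddCommGroup P] [Module A P]
    [AddCommGroup Q] [Module A Q] (hV : Module.Finite A V) (e : V ≃ₗ[A] P × Q) :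
    Module.Finite A Q := by
  haveI := hV
  haveI : Module.Finite A (P × Q) := Module.Finite.equiv e
  exact Module.Finite.of_surjective (LinearMap.snd A P Q) (fun q => ⟨(0, q), rfl⟩)

omit [IsNoetherianRing A] in
lemma summand_projective {V P Q : Type} [AddCommGroup V] [Module A V] [AddCommGroup P]
    [Module A P] [AddCommGroup Q] [Module A Q] (hV : Module.Projective A V)
    (e : V ≃ₗ[A] P × Q) : Module.Projective A Q := by
  haveI := hV
  refine Module.Projective.of_split (e.symm.toLinearMap ∘ₗ LinearMap.inr A P Q)
    (LinearMap.snd A P Q ∘ₗ e.toLinearMap) ?_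
  refine LinearMap.ext fun q => ?_
  simp

omit [IsNoetherianRing A] in
lemma exists_compl (P : Type) [AddCommGroup P] [Module A P] (hPfin : Module.Finite A P)
    (hPproj : Module.Projective A P) :
    ∃ (n : ℕ) (Q : Submodule A (Fin n → A)), Nonempty ((Fin n → A) ≃ₗ[A] P × Q) := by
  obtain ⟨n, s, hs⟩ := Module.Finite.exists_fin (R := A) (M := P)
  let π : (Fin n → A) →ₗ[A] P := (Pi.basisFun A (Fin n)).constr ℕ s
  have hπ : Function.Surjective π := by
    rw [← LinearMap.range_eq_top, eq_top_iff, ← hs, Submodule.span_le]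
    rintro - ⟨i, rfl⟩
    exact ⟨Pi.basisFun A (Fin n) i, (Pi.basisFun A (Fin n)).constr_basis ℕ s i⟩
  obtain ⟨σ, hσ⟩ := Module.projective_lifting_property π LinearMap.id hπ
  exact ⟨n, LinearMap.ker π, ⟨splitEquiv π σ hσ⟩⟩

end Main

section Final

variable {A : Type} [CommRing A] [IsNoetherianRing A]

lemma main_ind (d : ℕ)
    (hum : ∀ (P : Type) [AddCommGroup P] [Module A P],
      Module.Finite A P → Module.Projective A P →
      ∀ r : ℕ, d + 1 ≤ r → HasConstRank A P r →
      ∃ (p : P) (φ : P →ₗ[A] A), φ p = 1)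
    (hcan : ∀ m : ℕ, d + 1 ≤ m →
      ∀ (Q Q' : Type) [AddCommGroup Q] [Module A Q] [AddCommGroup Q'] [Module A Q'],
      Module.Finite A Q → Module.Projective A Q →
      Module.Finite A Q' → Module.Projective A Q' →
      HasConstRank A Q (m - 1) → HasConstRank A Q' (m - 1) →
      Nonempty ((A × Q) ≃ₗ[A] (A × Q')) → Nonempty (Q ≃ₗ[A] Q'))
    (P : Type) [AddCommGroup P] [Module A P]
    (hPfin : Module.Finite A P) (hPproj : Module.Projective A P)
    (r : ℕ) (hr : d + 1 ≤ r)
    (hrankP : ∀ p : PrimeSpectrum A, Module.rankAtStalk (R := A) P p = r) :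
    ∀ k : ℕ, ∀ (Q : Type) [AddCommGroup Q] [Module A Q],
      Module.Finite A Q → Module.Projective A Q →
      (∀ p : PrimeSpectrum A, Module.rankAtStalk (R := A) Q p = d + k) →
      Nonempty ((Fin (r + d + k) → A) ≃ₗ[A] P × Q) →
      ∃ s : Finset P, s.card ≤ r + d ∧ Submodule.span A (s : Set P) = ⊤ := by
  intro k
  induction k with
  | zero =>
    intro Q _ _ hQf hQp hQr ⟨e⟩
    have hsurj : Function.Surjective ((LinearMap.fst A P Q) ∘ₗ (e : (Fin (r + d + 0) → A) →ₗ[A] P × Q)) := by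
      intro x
      obtain ⟨v, hv⟩ := e.surjective (x, 0)
      exact ⟨v, by simp only [LinearMap.coe_comp, LinearEquiv.coe_coe, Function.comp_apply, hv, LinearMap.fst_apply]⟩
    exact gen_of_surj P (r + d) _ hsurj
  | succ k ih =>
    intro Q _ _ hQf hQp hQr ⟨e⟩
    -- `Q` has rank `d + k + 1 ≥ d + 1`, so it has a unimodular element
    obtain ⟨q, φ, hφ⟩ := hum Q hQf hQp (d + (k + 1)) (by omega)
      ((hasConstRank_iff_rankAtStalk Q hQf hQp _).mpr hQr)
    let σ : A →ₗ[A] Q := LinearMap.toSpanSingleton A Q q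
    have hπσ : φ ∘ₗ σ = LinearMap.id := by
      refine LinearMap.ext fun a => ?_
      simp [σ, hφ]
    let eQ : Q ≃ₗ[A] A × (LinearMap.ker φ) := splitEquiv φ σ hπσ
    set K := (LinearMap.ker φ : Submodule A Q)
    have hKf : Module.Finite A K := summand_finite hQf eQ
    have hKp : Module.Projective A K := summand_projective hQp eQ
    have hKr : ∀ p : PrimeSpectrum A, Module.rankAtStalk (R := A) K p = d + k := by
      intro p
      have h1 := rankAtStalk_congr eQ p
      have h2 := rankAtStalk_prod A K inferInstance inferInstance hKf hKp p
      have h3 := rankAtStalk_self p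
      have h4 := hQr p
      omega
    -- the big chain of equivalences
    let E1 : (A × (P × K)) ≃ₗ[A] P × (A × K) :=
      (LinearEquiv.prodAssoc A A P K).symm.trans
        (((LinearEquiv.prodComm A A P).prodCongr (LinearEquiv.refl A K)).trans
          (LinearEquiv.prodAssoc A P A K))
    let E2 : (P × (A × K)) ≃ₗ[A] P × Q := (LinearEquiv.refl A P).prodCongr eQ.symm
    let E4 : (Fin (r + d + (k + 1)) → A) ≃ₗ[A] A × (Fin (r + d + k) → A) :=
      ((LinearEquiv.funCongrLeft A A (finSumFinEquiv (m := r + d + k) (n := 1))).trans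
        ((LinearEquiv.sumArrowLequivProdArrow (Fin (r + d + k)) (Fin 1) A A).trans
          (((LinearEquiv.refl A (Fin (r + d + k) → A)).prodCongr
            (LinearEquiv.funUnique (Fin 1) A A)).trans
            (LinearEquiv.prodComm A (Fin (r + d + k) → A) A)))) 
    haveI := hPfin
    haveI := hKf
    have hPKf : Module.Finite A (P × K) := inferInstance
    have hPKp : Module.Projective A (P × K) := Module.Projective.prod' hPproj hKp
    have hPKr : HasConstRank A (P × K) (r + d + k) := by
      refine (hasConstRank_iff_rankAtStalk _ hPKf hPKp _).mpr fun p => ?_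
      have h1 := rankAtStalk_prod P K hPfin hPproj hKf hKp p
      have h2 := hrankP p
      have h3 := hKr p
      omega
    have hpi_r : HasConstRank A (Fin (r + d + k) → A) (r + d + k) :=
      (hasConstRank_iff_rankAtStalk _ inferInstance inferInstance _).mpr
        (fun p => rankAtStalk_pi _ p)
    have hchain : Nonempty ((A × (P × K)) ≃ₗ[A] (A × (Fin (r + d + k) → A))) :=
      ⟨E1.trans (E2.trans (e.symm.trans E4))⟩
    obtain ⟨e'⟩ := hcan (r + d + k + 1) (by omega) (P × K) (Fin (r + d + k) → A)
      hPKf hPKp inferInstance inferInstance hPKr hpi_r hchain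
    exact ih K hKf hKp hKr ⟨e'.symm⟩

end Final


/-- If every f.g. projective `A`-module of rank `≥ d + 1` has a unimodular element and
`Aᵐ` is cancellative for all `m ≥ d + 1` (i.e. `A ⊕ Q ≅ A ⊕ Q'` with `Q, Q'` of rank
`m - 1` implies `Q ≅ Q'`), then every f.g. projective `A`-module of constant rank
`r ≥ d + 1` is generated by `r + d` elements. -/
theorem stmt8 (A : Type) [CommRing A] [IsNoetherianRing A] (d : ℕ)
    (hum : ∀ (P : Type) [AddCommGroup P] [Module A P],
      Module.Finite A P → Module.Projective A P →
      ∀ r : ℕ, d + 1 ≤ r → HasConstRank A P r →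
      ∃ (p : P) (φ : P →ₗ[A] A), φ p = 1)
    (hcan : ∀ m : ℕ, d + 1 ≤ m →
      ∀ (Q Q' : Type) [AddCommGroup Q] [Module A Q] [AddCommGroup Q'] [Module A Q'],
      Module.Finite A Q → Module.Projective A Q →
      Module.Finite A Q' → Module.Projective A Q' →
      HasConstRank A Q (m - 1) → HasConstRank A Q' (m - 1) →
      Nonempty ((A × Q) ≃ₗ[A] (A × Q')) → Nonempty (Q ≃ₗ[A] Q'))
    (P : Type) [AddCommGroup P] [Module A P]
    (hPfin : Module.Finite A P) (hPproj : Module.Projective A P)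
    (r : ℕ) (hr : d + 1 ≤ r) (hrank : HasConstRank A P r) :
    ∃ s : Finset P, s.card ≤ r + d ∧ Submodule.span A (s : Set P) = ⊤ := by
  obtain ⟨n, Q, ⟨e⟩⟩ := exists_compl P hPfin hPproj
  by_cases hn : n ≤ r + d
  · have hsurj : Function.Surjective
        ((LinearMap.fst A P Q) ∘ₗ (e : (Fin n → A) →ₗ[A] P × Q)) := by
      intro x
      obtain ⟨v, hv⟩ := e.surjective (x, 0)
      exact ⟨v, by simp only [LinearMap.coe_comp, LinearEquiv.coe_coe, Function.comp_apply, hv,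
        LinearMap.fst_apply]⟩
    obtain ⟨s, hs1, hs2⟩ := gen_of_surj P n _ hsurj
    exact ⟨s, hs1.trans hn, hs2⟩
  · obtain ⟨k, hk⟩ : ∃ k, n = r + d + k := ⟨n - (r + d), by omega⟩
    subst hk
    have hrankP : ∀ p : PrimeSpectrum A, Module.rankAtStalk (R := A) P p = r :=
      fun p => (hasConstRank_iff_rankAtStalk P hPfin hPproj r).mp hrank p
    have hQf : Module.Finite A Q := summand_finite inferInstance e
    have hQp : Module.Projective A Q := summand_projective inferInstance e
    have hQr : ∀ p : PrimeSpectrum A, Module.rankAtStalk (R := A) Q p = d + k := by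
      intro p
      have h1 := rankAtStalk_congr e p
      have h2 := rankAtStalk_prod P Q hPfin hPproj hQf hQp p
      have h3 := rankAtStalk_pi (A := A) (r + d + k) p
      have h4 := hrankP p
      omega
    exact main_ind d hum hcan P hPfin hPproj r hr hrankP k Q hQf hQp hQr ⟨e⟩
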